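/- Let k ≥ 1 be an integer, a ≥ k a real number, t ≥ 0, and ζ a continuous function on [0,∞) with compact support. Then lim_{ε→0+} ∫_0^∞ ζ(r) r^{a+2} h_ε″(r²) (h_ε′(r²))^{k−1} dr = −2^{−(k+1)} ∫_t^∞ ζ(r) r^{a−k} dr + (2^{−(k+1)}/k) ζ(t) t^{a+1−k} (since a + 1 − k ≥ 1, the last term vanishes when t = 0). -/

import Mathlib

/-!
Statement 11: `lim_{ε→0⁺} ∫_0^∞ ζ(r) r^{a+2} h_ε''(r²) (h_ε'(r²))^{k-1} dr
  = −2^{−(k+1)} ∫_t^∞ ζ(r) r^{a−k} dr + (2^{−(k+1)}/k) ζ(t) t^{a+1−k}`.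
-/

noncomputable section

open Filter Topology Set MeasureTheory

/-- The smooth approximation
`h_ε(s) = (1/2)[√((√(s+ε²) − t)² + ε²) + √(s+ε²) − t]`. -/
def heps (t ε : ℝ) : ℝ → ℝ := fun s =>
  (1 / 2) * (Real.sqrt ((Real.sqrt (s + ε ^ 2) - t) ^ 2 + ε ^ 2) + Real.sqrt (s + ε ^ 2) - t)

/-- first derivative of `heps`. -/
def h1f (t ε : ℝ) : ℝ → ℝ := fun s =>
  1 / (4 * Real.sqrt (s + ε ^ 2)) *
    (1 + (Real.sqrt (s + ε ^ 2) - t) / Real.sqrt ((Real.sqrt (s + ε ^ 2) - t) ^ 2 + ε ^ 2))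

/-- second derivative of `heps`. -/
def h2f (t ε : ℝ) : ℝ → ℝ := fun s =>
  -(1 / (8 * Real.sqrt (s + ε ^ 2) ^ 3)) *
      (1 + (Real.sqrt (s + ε ^ 2) - t) / Real.sqrt ((Real.sqrt (s + ε ^ 2) - t) ^ 2 + ε ^ 2))
    + ε ^ 2 / (8 * (s + ε ^ 2) * Real.sqrt ((Real.sqrt (s + ε ^ 2) - t) ^ 2 + ε ^ 2) ^ 3)

lemma sqrt_inner_pos {ε : ℝ} (hε : 0 < ε) (x : ℝ) : 0 < Real.sqrt (x ^ 2 + ε ^ 2) :=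
  Real.sqrt_pos.2 (by positivity)

lemma hasDerivAt_U {ε : ℝ} (hε : 0 < ε) (s : ℝ) (hs : -ε ^ 2 < s) :
    HasDerivAt (fun s => Real.sqrt (s + ε ^ 2)) (1 / (2 * Real.sqrt (s + ε ^ 2))) s := by
  have h : (0:ℝ) < s + ε ^ 2 := by linarith
  have := (Real.hasDerivAt_sqrt (ne_of_gt h)).comp s ((hasDerivAt_id s).add_const (ε ^ 2))
  simpa [Function.comp_def] using this

lemma hasDerivAt_heps {t ε : ℝ} (hε : 0 < ε) (s : ℝ) (hs : -ε ^ 2 < s) :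
    HasDerivAt (heps t ε) (h1f t ε s) s := by
  have h : (0:ℝ) < s + ε ^ 2 := by linarith
  have hu0 : 0 < Real.sqrt (s + ε ^ 2) := Real.sqrt_pos.2 h
  set u := Real.sqrt (s + ε ^ 2) with hu
  have hv0 : 0 < Real.sqrt ((u - t) ^ 2 + ε ^ 2) := Real.sqrt_pos.2 (by positivity)
  set v := Real.sqrt ((u - t) ^ 2 + ε ^ 2) with hv
  have hU := hasDerivAt_U hε s hs
  have hinner : HasDerivAt (fun s => (Real.sqrt (s + ε ^ 2) - t) ^ 2 + ε ^ 2)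
      (2 * (u - t) * (1 / (2 * u))) s := by
    have := ((hU.sub_const t).pow 2).add_const (ε ^ 2)
    simpa [mul_comm, mul_assoc, mul_left_comm] using this
  have hV : HasDerivAt (fun s => Real.sqrt ((Real.sqrt (s + ε ^ 2) - t) ^ 2 + ε ^ 2))
      (1 / (2 * v) * (2 * (u - t) * (1 / (2 * u)))) s := by
    have hne : (u - t) ^ 2 + ε ^ 2 ≠ 0 := by positivity
    have := (Real.hasDerivAt_sqrt hne).comp s hinner
    simpa [Function.comp_def, hv, mul_comm, mul_assoc, mul_left_comm] using this
  have : HasDerivAt (heps t ε)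
      ((1/2) * ((1 / (2 * v) * (2 * (u - t) * (1 / (2 * u)))) + 1 / (2 * u))) s := by
    exact (((hV.add hU).sub_const t).const_mul (1/2))
  convert this using 1
  show 1 / (4 * u) * (1 + (u - t) / v) = _
  field_simp
  ring

lemma hasDerivAt_h1f {t ε : ℝ} (hε : 0 < ε) (s : ℝ) (hs : -ε ^ 2 < s) :
    HasDerivAt (h1f t ε) (h2f t ε s) s := by
  have h : (0:ℝ) < s + ε ^ 2 := by linarith
  have hu0 : 0 < Real.sqrt (s + ε ^ 2) := Real.sqrt_pos.2 h
  have hu2 : Real.sqrt (s + ε ^ 2) ^ 2 = s + ε ^ 2 := Real.sq_sqrt (le_of_lt h)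
  set u := Real.sqrt (s + ε ^ 2) with hu
  have hv0 : 0 < Real.sqrt ((u - t) ^ 2 + ε ^ 2) := Real.sqrt_pos.2 (by positivity)
  have hv2 : Real.sqrt ((u - t) ^ 2 + ε ^ 2) ^ 2 = (u - t) ^ 2 + ε ^ 2 :=
    Real.sq_sqrt (by positivity)
  set v := Real.sqrt ((u - t) ^ 2 + ε ^ 2) with hv
  have hU := hasDerivAt_U hε s hs
  have hinner : HasDerivAt (fun s => (Real.sqrt (s + ε ^ 2) - t) ^ 2 + ε ^ 2)
      (2 * (u - t) * (1 / (2 * u))) s := by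
    have := ((hU.sub_const t).pow 2).add_const (ε ^ 2)
    simpa [mul_comm, mul_assoc, mul_left_comm] using this
  have hV : HasDerivAt (fun s => Real.sqrt ((Real.sqrt (s + ε ^ 2) - t) ^ 2 + ε ^ 2))
      (1 / (2 * v) * (2 * (u - t) * (1 / (2 * u)))) s := by
    have hne : (u - t) ^ 2 + ε ^ 2 ≠ 0 := by positivity
    have := (Real.hasDerivAt_sqrt hne).comp s hinner
    simpa [Function.comp_def, hv, mul_comm, mul_assoc, mul_left_comm] using this
  -- f1 = 1/(4u)
  have hf1 : HasDerivAt (fun s => 1 / (4 * Real.sqrt (s + ε ^ 2)))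
      (-(4 * (1 / (2 * u))) / (4 * u) ^ 2) s := by
    have h4 : HasDerivAt (fun s => 4 * Real.sqrt (s + ε ^ 2)) (4 * (1 / (2 * u))) s :=
      hU.const_mul 4
    have := h4.inv (by positivity)
    simpa [one_div, Pi.inv_def] using this
  -- f2 = 1 + (u-t)/v
  have hf2 : HasDerivAt
      (fun s => 1 + (Real.sqrt (s + ε ^ 2) - t) / Real.sqrt ((Real.sqrt (s + ε ^ 2) - t) ^ 2 + ε ^ 2))
      (((1 / (2 * u)) * v - (u - t) * (1 / (2 * v) * (2 * (u - t) * (1 / (2 * u))))) / v ^ 2) s := by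
    exact (((hU.sub_const t).div hV (ne_of_gt hv0))).const_add 1
  have := hf1.mul hf2
  convert this using 1
  show h2f t ε s = _
  unfold h2f
  rw [← hu, ← hv, ← hu2]
  field_simp
  linear_combination (-8 * u) * hv2
  all_goals rfl


/-- `W(r) = ψ(U(r))^k` where `ψ(u) = (1 + (u-t)/√((u-t)²+ε²))/4`. -/
def Wfn (k : ℕ) (t ε : ℝ) : ℝ → ℝ := fun r =>
  ((1 + (Real.sqrt (r ^ 2 + ε ^ 2) - t) /
      Real.sqrt ((Real.sqrt (r ^ 2 + ε ^ 2) - t) ^ 2 + ε ^ 2)) / 4) ^ k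

def Wdn (k : ℕ) (t ε : ℝ) : ℝ → ℝ := fun r =>
  k * ((1 + (Real.sqrt (r ^ 2 + ε ^ 2) - t) /
      Real.sqrt ((Real.sqrt (r ^ 2 + ε ^ 2) - t) ^ 2 + ε ^ 2)) / 4) ^ (k - 1) *
    (ε ^ 2 / (4 * Real.sqrt ((Real.sqrt (r ^ 2 + ε ^ 2) - t) ^ 2 + ε ^ 2) ^ 3)) *
    (r / Real.sqrt (r ^ 2 + ε ^ 2))

lemma hasDerivAt_Ur {ε : ℝ} (hε : 0 < ε) (r : ℝ) :
    HasDerivAt (fun r : ℝ => Real.sqrt (r ^ 2 + ε ^ 2)) (r / Real.sqrt (r ^ 2 + ε ^ 2)) r := by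
  have h : (0:ℝ) < r ^ 2 + ε ^ 2 := by positivity
  have hin : HasDerivAt (fun r : ℝ => r ^ 2 + ε ^ 2) (2 * r) r := by
    simpa using ((hasDerivAt_id r).pow 2).add_const (ε ^ 2)
  have := (Real.hasDerivAt_sqrt (ne_of_gt h)).comp r hin
  have hu0 : 0 < Real.sqrt (r ^ 2 + ε ^ 2) := Real.sqrt_pos.2 h
  refine this.congr_deriv ?_
  field_simp

lemma hasDerivAt_Wfn {k : ℕ} (hk : 1 ≤ k) {t ε : ℝ} (hε : 0 < ε) (r : ℝ) :
    HasDerivAt (Wfn k t ε) (Wdn k t ε r) r := by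
  have h : (0:ℝ) < r ^ 2 + ε ^ 2 := by positivity
  have hu0 : 0 < Real.sqrt (r ^ 2 + ε ^ 2) := Real.sqrt_pos.2 h
  set u := Real.sqrt (r ^ 2 + ε ^ 2) with hu
  have hv0 : 0 < Real.sqrt ((u - t) ^ 2 + ε ^ 2) := Real.sqrt_pos.2 (by positivity)
  have hv2 : Real.sqrt ((u - t) ^ 2 + ε ^ 2) ^ 2 = (u - t) ^ 2 + ε ^ 2 :=
    Real.sq_sqrt (by positivity)
  set v := Real.sqrt ((u - t) ^ 2 + ε ^ 2) with hv
  have hU := hasDerivAt_Ur hε r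
  rw [← hu] at hU
  have hinner : HasDerivAt (fun r : ℝ => (Real.sqrt (r ^ 2 + ε ^ 2) - t) ^ 2 + ε ^ 2)
      (2 * (u - t) * (r / u)) r := by
    have := ((hU.sub_const t).pow 2).add_const (ε ^ 2)
    simpa [mul_comm, mul_assoc, mul_left_comm] using this
  have hV : HasDerivAt (fun r : ℝ => Real.sqrt ((Real.sqrt (r ^ 2 + ε ^ 2) - t) ^ 2 + ε ^ 2))
      (1 / (2 * v) * (2 * (u - t) * (r / u))) r := by
    have hne : (u - t) ^ 2 + ε ^ 2 ≠ 0 := by positivity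
    have := (Real.hasDerivAt_sqrt hne).comp r hinner
    simpa [Function.comp_def, hv, mul_comm, mul_assoc, mul_left_comm] using this
  have hψ : HasDerivAt (fun r : ℝ => (1 + (Real.sqrt (r ^ 2 + ε ^ 2) - t) /
      Real.sqrt ((Real.sqrt (r ^ 2 + ε ^ 2) - t) ^ 2 + ε ^ 2)) / 4)
      ((((r / u) * v - (u - t) * (1 / (2 * v) * (2 * (u - t) * (r / u)))) / v ^ 2) / 4) r := by
    exact (((hU.sub_const t).div hV (ne_of_gt hv0)).const_add 1).div_const 4
  have := hψ.pow k
  convert this using 1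
  show Wdn k t ε r = _
  unfold Wdn
  rw [← hu, ← hv]
  have : (r / u * v - (u - t) * (1 / (2 * v) * (2 * (u - t) * (r / u)))) / v ^ 2 / 4
      = ε ^ 2 / (4 * v ^ 3) * (r / u) := by
    field_simp
    linear_combination r * hv2
  rw [this]
  ring
  all_goals rfl


lemma abs_le_sqrt_sq_add {ε : ℝ} (x : ℝ) : |x| ≤ Real.sqrt (x ^ 2 + ε ^ 2) := by
  rw [← Real.sqrt_sq_eq_abs]
  exact Real.sqrt_le_sqrt (by nlinarith [sq_nonneg ε])

lemma ratio_bounds {ε : ℝ} (hε : 0 < ε) (x : ℝ) :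
    -1 ≤ x / Real.sqrt (x ^ 2 + ε ^ 2) ∧ x / Real.sqrt (x ^ 2 + ε ^ 2) ≤ 1 := by
  have hv : 0 < Real.sqrt (x ^ 2 + ε ^ 2) := Real.sqrt_pos.2 (by positivity)
  constructor
  · rw [neg_le, ← neg_div]
    refine (div_le_one hv).2 (le_trans (le_abs_self (-x)) ?_)
    simpa [abs_neg] using abs_le_sqrt_sq_add (ε := ε) x
  · exact (div_le_one hv).2 (le_trans (le_abs_self x) (abs_le_sqrt_sq_add x))

lemma psi_bounds {t ε : ℝ} (hε : 0 < ε) (u : ℝ) :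
    0 ≤ (1 + (u - t) / Real.sqrt ((u - t) ^ 2 + ε ^ 2)) / 4 ∧
      (1 + (u - t) / Real.sqrt ((u - t) ^ 2 + ε ^ 2)) / 4 ≤ 1 / 2 := by
  obtain ⟨h1, h2⟩ := ratio_bounds hε (u - t)
  constructor <;> linarith

lemma h1f_nonneg {t ε : ℝ} (hε : 0 < ε) (s : ℝ) (hs : -ε ^ 2 < s) : 0 ≤ h1f t ε s := by
  have h : (0:ℝ) < s + ε ^ 2 := by linarith
  have hu0 : 0 < Real.sqrt (s + ε ^ 2) := Real.sqrt_pos.2 h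
  obtain ⟨h1, _⟩ := ratio_bounds hε (Real.sqrt (s + ε ^ 2) - t)
  unfold h1f
  have : (0:ℝ) ≤ 1 + (Real.sqrt (s + ε ^ 2) - t) /
      Real.sqrt ((Real.sqrt (s + ε ^ 2) - t) ^ 2 + ε ^ 2) := by linarith
  positivity

lemma h1f_le {t ε : ℝ} (hε : 0 < ε) {r : ℝ} (hr : 0 < r) :
    h1f t ε (r ^ 2) ≤ 1 / (2 * r) := by
  have h : (0:ℝ) < r ^ 2 + ε ^ 2 := by positivity
  have hu0 : 0 < Real.sqrt (r ^ 2 + ε ^ 2) := Real.sqrt_pos.2 h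
  have hur : r ≤ Real.sqrt (r ^ 2 + ε ^ 2) := by
    calc r ≤ |r| := le_abs_self r
    _ ≤ _ := abs_le_sqrt_sq_add r
  obtain ⟨h1, h2⟩ := ratio_bounds hε (Real.sqrt (r ^ 2 + ε ^ 2) - t)
  unfold h1f
  calc 1 / (4 * Real.sqrt (r ^ 2 + ε ^ 2)) *
      (1 + (Real.sqrt (r ^ 2 + ε ^ 2) - t) /
        Real.sqrt ((Real.sqrt (r ^ 2 + ε ^ 2) - t) ^ 2 + ε ^ 2))
      ≤ 1 / (4 * Real.sqrt (r ^ 2 + ε ^ 2)) * 2 := by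
        apply mul_le_mul_of_nonneg_left (by linarith) (by positivity)
  _ ≤ 1 / (4 * r) * 2 := by
        apply mul_le_mul_of_nonneg_right _ (by norm_num)
        apply one_div_le_one_div_of_le (by positivity) (by linarith)
  _ = 1 / (2 * r) := by field_simp; ring
  
lemma Wfn_nonneg {k : ℕ} {t ε : ℝ} (hε : 0 < ε) (r : ℝ) : 0 ≤ Wfn k t ε r := by
  obtain ⟨h1, _⟩ := psi_bounds (t := t) hε (Real.sqrt (r ^ 2 + ε ^ 2))
  exact pow_nonneg h1 k

lemma Wfn_le {k : ℕ} {t ε : ℝ} (hε : 0 < ε) (r : ℝ) : Wfn k t ε r ≤ (1 / 2) ^ k := by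
  obtain ⟨h1, h2⟩ := psi_bounds (t := t) hε (Real.sqrt (r ^ 2 + ε ^ 2))
  exact pow_le_pow_left₀ h1 h2 k

lemma Wdn_nonneg {k : ℕ} {t ε : ℝ} (hε : 0 < ε) {r : ℝ} (hr : 0 ≤ r) : 0 ≤ Wdn k t ε r := by
  obtain ⟨h1, _⟩ := psi_bounds (t := t) hε (Real.sqrt (r ^ 2 + ε ^ 2))
  unfold Wdn
  have h : (0:ℝ) < r ^ 2 + ε ^ 2 := by positivity
  have hu0 : 0 < Real.sqrt (r ^ 2 + ε ^ 2) := Real.sqrt_pos.2 h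
  have hv0 : 0 < Real.sqrt ((Real.sqrt (r ^ 2 + ε ^ 2) - t) ^ 2 + ε ^ 2) :=
    Real.sqrt_pos.2 (by positivity)
  have := pow_nonneg h1 (k - 1)
  positivity

lemma tendsto_sqrt_eps {x : ℝ} (hx : 0 ≤ x) :
    Tendsto (fun ε : ℝ => Real.sqrt (x ^ 2 + ε ^ 2)) (nhdsWithin 0 (Set.Ioi 0)) (𝓝 x) := by
  have hc : Continuous fun ε : ℝ => Real.sqrt (x ^ 2 + ε ^ 2) :=
    Real.continuous_sqrt.comp (by continuity)
  have := (hc.tendsto 0).mono_left (nhdsWithin_le_nhds (s := Set.Ioi 0))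
  simpa [Real.sqrt_sq hx] using this

lemma tendsto_ratio (t : ℝ) {x : ℝ} (hx : 0 ≤ x) (hne : x ≠ t) :
    Tendsto (fun ε : ℝ => (Real.sqrt (x ^ 2 + ε ^ 2) - t) /
        Real.sqrt ((Real.sqrt (x ^ 2 + ε ^ 2) - t) ^ 2 + ε ^ 2))
      (nhdsWithin 0 (Set.Ioi 0)) (𝓝 ((x - t) / |x - t|)) := by
  have hnum : Tendsto (fun ε : ℝ => Real.sqrt (x ^ 2 + ε ^ 2) - t)
      (nhdsWithin 0 (Set.Ioi 0)) (𝓝 (x - t)) := (tendsto_sqrt_eps hx).sub_const t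
  have hsq : Tendsto (fun ε : ℝ => (Real.sqrt (x ^ 2 + ε ^ 2) - t) ^ 2 + ε ^ 2)
      (nhdsWithin 0 (Set.Ioi 0)) (𝓝 ((x - t) ^ 2)) := by
    have h2 : Tendsto (fun ε : ℝ => ε ^ 2) (nhdsWithin 0 (Set.Ioi 0)) (𝓝 0) := by
      have := ((continuous_pow 2).tendsto (0:ℝ)).mono_left (nhdsWithin_le_nhds (s := Set.Ioi 0))
      simpa using this
    simpa using (hnum.pow 2).add h2
  have hden : Tendsto (fun ε : ℝ => Real.sqrt ((Real.sqrt (x ^ 2 + ε ^ 2) - t) ^ 2 + ε ^ 2))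
      (nhdsWithin 0 (Set.Ioi 0)) (𝓝 |x - t|) := by
    have := (Real.continuous_sqrt.tendsto ((x - t) ^ 2)).comp hsq
    simpa [Function.comp_def, Real.sqrt_sq_eq_abs] using this
  exact hnum.div hden (abs_ne_zero.2 (sub_ne_zero.2 hne))

lemma tendsto_h1f {t x : ℝ} (hx : 0 < x) (hne : x ≠ t) :
    Tendsto (fun ε : ℝ => h1f t ε (x ^ 2)) (nhdsWithin 0 (Set.Ioi 0))
      (𝓝 (1 / (4 * x) * (1 + (x - t) / |x - t|))) := by
  have h4 : Tendsto (fun ε : ℝ => 1 / (4 * Real.sqrt (x ^ 2 + ε ^ 2)))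
      (nhdsWithin 0 (Set.Ioi 0)) (𝓝 (1 / (4 * x))) := by
    exact tendsto_const_nhds.div ((tendsto_sqrt_eps hx.le).const_mul 4) (by positivity)
  exact h4.mul ((tendsto_ratio t hx.le hne).const_add 1)

lemma tendsto_Wfn (k : ℕ) {t x : ℝ} (hx : 0 ≤ x) (hne : x ≠ t) :
    Tendsto (fun ε : ℝ => Wfn k t ε x) (nhdsWithin 0 (Set.Ioi 0))
      (𝓝 (((1 + (x - t) / |x - t|) / 4) ^ k)) :=
  (((tendsto_ratio t hx hne).const_add 1).div_const 4).pow k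

lemma integrableOn_Ioi_of_support {f : ℝ → ℝ} {M : ℝ} (hM : 0 < M)
    (hf : ContinuousOn f (Set.Icc 0 M)) (h0 : ∀ r, M < r → f r = 0) :
    IntegrableOn f (Set.Ioi 0) := by
  have hset : Set.Ioc 0 M ∪ Set.Ioi M = Set.Ioi (0:ℝ) := Set.Ioc_union_Ioi_eq_Ioi hM.le
  rw [← hset]
  apply MeasureTheory.IntegrableOn.union
  · exact (hf.integrableOn_Icc).mono_set Set.Ioc_subset_Icc_self
  · exact (MeasureTheory.integrableOn_congr_fun (fun x hx => h0 x hx) measurableSet_Ioi).2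
      (MeasureTheory.integrableOn_zero)

lemma setIntegral_Ioi_eq_intervalIntegral {f : ℝ → ℝ} {M : ℝ} (hM : 0 < M)
    (h0 : ∀ r, M < r → f r = 0) (hint : IntegrableOn f (Set.Ioi 0)) :
    ∫ r in Set.Ioi (0:ℝ), f r = ∫ r in (0:ℝ)..M, f r := by
  rw [intervalIntegral.integral_of_le hM.le]
  have hset : Set.Ioc 0 M ∪ Set.Ioi M = Set.Ioi (0:ℝ) := Set.Ioc_union_Ioi_eq_Ioi hM.le
  rw [← hset, MeasureTheory.setIntegral_union (Set.Ioc_disjoint_Ioi le_rfl) measurableSet_Ioi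
    (hint.mono_set (by rw [← hset]; exact Set.subset_union_left))
    (hint.mono_set (by rw [← hset]; exact Set.subset_union_right))]
  have : ∫ r in Set.Ioi M, f r = 0 := by
    apply MeasureTheory.setIntegral_eq_zero_of_forall_eq_zero
    exact fun x hx => h0 x hx
  rw [this, add_zero]

lemma continuous_sqrt_comp {ε : ℝ} (hε : 0 < ε) :
    Continuous fun r : ℝ => Real.sqrt (r ^ 2 + ε ^ 2) :=
  Real.continuous_sqrt.comp (by continuity)

lemma continuous_h1f_comp {t ε : ℝ} (hε : 0 < ε) :
    Continuous fun r : ℝ => h1f t ε (r ^ 2) := by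
  have hU := continuous_sqrt_comp hε
  have hV : Continuous fun r : ℝ =>
      Real.sqrt ((Real.sqrt (r ^ 2 + ε ^ 2) - t) ^ 2 + ε ^ 2) :=
    Real.continuous_sqrt.comp (by fun_prop)
  have hUne : ∀ r : ℝ, 4 * Real.sqrt (r ^ 2 + ε ^ 2) ≠ 0 :=
    fun r => by have := sqrt_inner_pos hε r; positivity
  have hVne : ∀ r : ℝ, Real.sqrt ((Real.sqrt (r ^ 2 + ε ^ 2) - t) ^ 2 + ε ^ 2) ≠ 0 :=
    fun r => ne_of_gt (Real.sqrt_pos.2 (by positivity))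
  unfold h1f
  exact (continuous_const.div (continuous_const.mul hU) hUne).mul
    (continuous_const.add ((hU.sub continuous_const).div hV hVne))

lemma continuous_Wdn {k : ℕ} {t ε : ℝ} (hε : 0 < ε) : Continuous (Wdn k t ε) := by
  have hU := continuous_sqrt_comp hε
  have hV : Continuous fun r : ℝ =>
      Real.sqrt ((Real.sqrt (r ^ 2 + ε ^ 2) - t) ^ 2 + ε ^ 2) :=
    Real.continuous_sqrt.comp (by fun_prop)
  have hUne : ∀ r : ℝ, Real.sqrt (r ^ 2 + ε ^ 2) ≠ 0 :=
    fun r => ne_of_gt (sqrt_inner_pos hε r)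
  have hVne : ∀ r : ℝ, 4 * Real.sqrt ((Real.sqrt (r ^ 2 + ε ^ 2) - t) ^ 2 + ε ^ 2) ^ 3 ≠ 0 :=
    fun r => by have := Real.sqrt_pos.2 (show (0:ℝ) < (Real.sqrt (r ^ 2 + ε ^ 2) - t) ^ 2 + ε ^ 2 by positivity); positivity
  have hψ : Continuous fun r : ℝ => ((1 + (Real.sqrt (r ^ 2 + ε ^ 2) - t) /
      Real.sqrt ((Real.sqrt (r ^ 2 + ε ^ 2) - t) ^ 2 + ε ^ 2)) / 4) ^ (k - 1) :=
    ((continuous_const.add ((hU.sub continuous_const).div hV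
      (fun r => ne_of_gt (Real.sqrt_pos.2 (by positivity))))).div_const 4).pow (k - 1)
  unfold Wdn
  exact (((continuous_const.mul hψ).mul
    (continuous_const.div (continuous_const.mul (hV.pow 3)) hVne)).mul
    (continuous_id.div hU hUne))

lemma contOn_rpow {c : ℝ} (hc : 0 ≤ c) : ContinuousOn (fun r : ℝ => r ^ c) (Set.Ici 0) :=
  fun x _ => (Real.continuousAt_rpow_const x c (Or.inr hc)).continuousWithinAt

lemma integrand_split {k : ℕ} (hk : 1 ≤ k) (a : ℝ) {t ε r : ℝ} (hε : 0 < ε) (hr : 0 < r)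
    (c : ℝ) :
    c * r ^ (a + 2) * h2f t ε (r ^ 2) * (h1f t ε (r ^ 2)) ^ (k - 1)
      = -(c * r ^ (a + 2) / (2 * (r ^ 2 + ε ^ 2))) * (h1f t ε (r ^ 2)) ^ k
        + (c * r ^ (a + 1) / (2 * k * Real.sqrt (r ^ 2 + ε ^ 2) ^ k)) * Wdn k t ε r := by
  obtain ⟨m, rfl⟩ : ∃ m, k = m + 1 := ⟨k - 1, (Nat.succ_pred_eq_of_pos hk).symm⟩
  have h : (0:ℝ) < r ^ 2 + ε ^ 2 := by positivity
  have hu0 : 0 < Real.sqrt (r ^ 2 + ε ^ 2) := Real.sqrt_pos.2 h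
  have hu2 : Real.sqrt (r ^ 2 + ε ^ 2) ^ 2 = r ^ 2 + ε ^ 2 := Real.sq_sqrt h.le
  have hra : r ^ (a + 2) = r ^ (a + 1) * r := by
    rw [show a + 2 = (a + 1) + 1 by ring, Real.rpow_add_one (ne_of_gt hr)]
  simp only [h1f, h2f, Wdn]
  set u := Real.sqrt (r ^ 2 + ε ^ 2) with hu
  have hv0 : 0 < Real.sqrt ((u - t) ^ 2 + ε ^ 2) := Real.sqrt_pos.2 (by positivity)
  have hv2 : Real.sqrt ((u - t) ^ 2 + ε ^ 2) ^ 2 = (u - t) ^ 2 + ε ^ 2 :=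
    Real.sq_sqrt (by positivity)
  set v := Real.sqrt ((u - t) ^ 2 + ε ^ 2) with hv
  rw [← hu2, hra]
  simp only [Nat.add_sub_cancel, Nat.cast_add, Nat.cast_one]
  have hmu : (m:ℝ) + 1 ≠ 0 := by positivity
  field_simp
  simp only [div_pow, mul_pow]
  field_simp
  ring

lemma rpow_alg {r : ℝ} (hr : 0 < r) (a : ℝ) (k : ℕ) :
    r ^ (a + 2) / (2 * r ^ 2) * (1 / (2 * r)) ^ k = r ^ (a - (k:ℝ)) * ((2:ℝ) ^ (k + 1))⁻¹ := by
  rw [show a + 2 = (a - (k:ℝ)) + ((k:ℝ) + 2) by ring, Real.rpow_add hr,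
    show ((k:ℝ) + 2) = ((k + 2 : ℕ) : ℝ) by push_cast; ring, Real.rpow_natCast]
  have h2 : (2:ℝ) ^ (k + 1) ≠ 0 := by positivity
  have hrk : r ^ (k + 2) ≠ 0 := by positivity
  field_simp
  have e1 : r ^ k * r⁻¹ ^ k = 1 := by rw [← mul_pow, mul_inv_cancel₀ hr.ne', one_pow]
  have e2 : (1 / 2 : ℝ) ^ k * 2 ^ k = 1 := by rw [← mul_pow]; norm_num
  linear_combination (r ^ 2 * 2 * (1 / 2 : ℝ) ^ k * 2 ^ k) * e1 + (r ^ 2 * 2) * e2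

lemma T1_tendsto (k : ℕ) (hk : 1 ≤ k) (a : ℝ) (ha : (k : ℝ) ≤ a) (t : ℝ) (ht : 0 ≤ t)
    (ζ : ℝ → ℝ) (hcont : ContinuousOn ζ (Set.Ici 0)) (M : ℝ) (hM0 : 0 < M)
    (hζ0 : ∀ r, M < r → ζ r = 0) :
    Tendsto (fun ε : ℝ => ∫ r in Set.Ioi (0:ℝ),
        -(ζ r * r ^ (a + 2) / (2 * (r ^ 2 + ε ^ 2))) * (h1f t ε (r ^ 2)) ^ k)
      (nhdsWithin 0 (Set.Ioi 0))
      (𝓝 (-((2 : ℝ) ^ (k + 1))⁻¹ * ∫ r in Set.Ioi t, ζ r * r ^ (a - (k : ℝ)))) := by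
  have hak : (0:ℝ) ≤ a - k := by linarith
  set bnd : ℝ → ℝ := fun r => |ζ r| * r ^ (a - (k:ℝ)) * ((2:ℝ) ^ (k + 1))⁻¹ with hbnd
  have hbndc : ContinuousOn bnd (Set.Icc 0 M) :=
    (((hcont.mono (Set.Icc_subset_Ici_self)).abs.mul
      ((contOn_rpow hak).mono (Set.Icc_subset_Ici_self))).mul continuousOn_const)
  have hbnd_int : IntegrableOn bnd (Set.Ioi 0) :=
    integrableOn_Ioi_of_support hM0 hbndc
      (fun r hr => by simp [hbnd, hζ0 r hr])
  set flim : ℝ → ℝ :=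
    Set.indicator (Set.Ioi t) (fun r => -((2:ℝ) ^ (k + 1))⁻¹ * (ζ r * r ^ (a - (k:ℝ)))) with hflim
  have key : Tendsto (fun ε : ℝ => ∫ r in Set.Ioi (0:ℝ),
      -(ζ r * r ^ (a + 2) / (2 * (r ^ 2 + ε ^ 2))) * (h1f t ε (r ^ 2)) ^ k)
      (nhdsWithin 0 (Set.Ioi 0)) (𝓝 (∫ r in Set.Ioi (0:ℝ), flim r)) := by
    apply MeasureTheory.tendsto_integral_filter_of_dominated_convergence bnd
    · filter_upwards [self_mem_nhdsWithin] with ε (hε : 0 < ε)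
      apply ContinuousOn.aestronglyMeasurable _ measurableSet_Ioi
      apply ContinuousOn.mono _ Set.Ioi_subset_Ici_self
      refine ContinuousOn.mul ?_ (((continuous_h1f_comp hε).pow k).continuousOn)
      refine ContinuousOn.neg (ContinuousOn.div (hcont.mul (contOn_rpow (by linarith))) ?_ ?_)
      · exact (continuous_const.mul ((continuous_pow 2).add continuous_const)).continuousOn
      · intro x _; have : (0:ℝ) < x ^ 2 + ε ^ 2 := by positivity
        positivity
    · filter_upwards [self_mem_nhdsWithin] with ε (hε : 0 < ε)
      refine (MeasureTheory.ae_restrict_iff' measurableSet_Ioi).2 (.of_forall fun r hr => ?_)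
      have hr : 0 < r := hr
      have h1 : (0:ℝ) ≤ h1f t ε (r ^ 2) := h1f_nonneg hε _ (by nlinarith)
      have h2 : h1f t ε (r ^ 2) ≤ 1 / (2 * r) := h1f_le hε hr
      have hden : (0:ℝ) < 2 * (r ^ 2 + ε ^ 2) := by positivity
      have step1 : ‖-(ζ r * r ^ (a + 2) / (2 * (r ^ 2 + ε ^ 2))) * h1f t ε (r ^ 2) ^ k‖
          = |ζ r| * (r ^ (a + 2) / (2 * (r ^ 2 + ε ^ 2))) * h1f t ε (r ^ 2) ^ k := by
        rw [norm_mul, norm_neg, norm_div, Real.norm_eq_abs, Real.norm_eq_abs, abs_mul,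
          abs_of_nonneg (Real.rpow_nonneg hr.le _), abs_of_pos hden,
          Real.norm_eq_abs, abs_of_nonneg (pow_nonneg h1 k)]
        ring
      have hbr : bnd r = |ζ r| * (r ^ (a + 2) / (2 * r ^ 2) * (1 / (2 * r)) ^ k) := by
        simp only [hbnd]; rw [rpow_alg hr a k]; ring
      rw [step1, hbr]
      have hle1 : r ^ (a + 2) / (2 * (r ^ 2 + ε ^ 2)) ≤ r ^ (a + 2) / (2 * r ^ 2) := by
        apply div_le_div_of_nonneg_left (Real.rpow_nonneg hr.le _) (by positivity)
        nlinarith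
      have hle2 : h1f t ε (r ^ 2) ^ k ≤ (1 / (2 * r)) ^ k := pow_le_pow_left₀ h1 h2 k
      calc |ζ r| * (r ^ (a + 2) / (2 * (r ^ 2 + ε ^ 2))) * h1f t ε (r ^ 2) ^ k
          ≤ |ζ r| * (r ^ (a + 2) / (2 * r ^ 2)) * (1 / (2 * r)) ^ k := by
            apply mul_le_mul (mul_le_mul le_rfl hle1 (by positivity) (abs_nonneg _)) hle2
              (pow_nonneg h1 k)
            positivity
        _ = |ζ r| * (r ^ (a + 2) / (2 * r ^ 2) * (1 / (2 * r)) ^ k) := by ring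
    · exact hbnd_int
    · have hne : ∀ᵐ r : ℝ, r ≠ t := by
        rw [MeasureTheory.ae_iff]
        simp only [not_not]
        rw [Set.setOf_eq_eq_singleton]
        exact MeasureTheory.measure_singleton t
      filter_upwards [MeasureTheory.ae_restrict_of_ae hne,
        MeasureTheory.ae_restrict_mem measurableSet_Ioi] with r hrt (hr : 0 < r)
      have hden : Tendsto (fun ε : ℝ => 2 * (r ^ 2 + ε ^ 2)) (nhdsWithin 0 (Set.Ioi 0))
          (𝓝 (2 * r ^ 2)) := by
        have : Continuous fun ε : ℝ => 2 * (r ^ 2 + ε ^ 2) := by continuity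
        have := (this.tendsto 0).mono_left (nhdsWithin_le_nhds (s := Set.Ioi 0))
        simpa using this
      have hmain : Tendsto (fun ε : ℝ =>
          -(ζ r * r ^ (a + 2) / (2 * (r ^ 2 + ε ^ 2))) * (h1f t ε (r ^ 2)) ^ k)
          (nhdsWithin 0 (Set.Ioi 0))
          (𝓝 (-(ζ r * r ^ (a + 2) / (2 * r ^ 2)) *
            (1 / (4 * r) * (1 + (r - t) / |r - t|)) ^ k)) := by
        exact ((tendsto_const_nhds.div hden (by positivity)).neg).mul
          ((tendsto_h1f hr hrt).pow k)
      convert hmain using 2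
      rcases lt_or_gt_of_ne hrt with hlt | hgt
      · -- r < t : limit is 0, r ∉ Ioi t
        rw [hflim, Set.indicator_of_notMem (by simpa using hlt.le.not_gt)]
        rw [abs_of_neg (by linarith : r - t < 0), div_neg, div_self (by linarith : r - t ≠ 0)]
        rw [show (1:ℝ) + -1 = 0 by ring, mul_zero, zero_pow (by omega : k ≠ 0), mul_zero]
      · -- r > t
        rw [hflim, Set.indicator_of_mem (by simpa using hgt)]
        rw [abs_of_pos (by linarith : 0 < r - t), div_self (by linarith : r - t ≠ 0)]
        rw [show 1 / (4 * r) * (1 + 1) = 1 / (2 * r) by field_simp; ring]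
        linear_combination (ζ r) * rpow_alg hr a k
  convert key using 2
  rw [hflim, MeasureTheory.setIntegral_indicator measurableSet_Ioi,
    Set.Ioi_inter_Ioi, max_eq_right ht]
  exact (MeasureTheory.integral_const_mul _ _).symm

lemma g_pt_le {a : ℝ} {k : ℕ} {ε r : ℝ} (hε : 0 < ε) (hr : 0 ≤ r) (hak : (0:ℝ) ≤ a + 1 - k)
    (ha1 : (0:ℝ) < a + 1) :
    r ^ (a + 1) / Real.sqrt (r ^ 2 + ε ^ 2) ^ k ≤ r ^ (a + 1 - (k:ℝ)) := by
  rcases eq_or_lt_of_le hr with h0 | h0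
  · subst h0
    rw [Real.zero_rpow (ne_of_gt ha1), zero_div]
    exact Real.rpow_nonneg le_rfl _
  · have hu : 0 < Real.sqrt (r ^ 2 + ε ^ 2) := Real.sqrt_pos.2 (by positivity)
    have hru : r ≤ Real.sqrt (r ^ 2 + ε ^ 2) := by
      calc r ≤ |r| := le_abs_self r
      _ ≤ _ := abs_le_sqrt_sq_add r
    have hpow : r ^ k ≤ Real.sqrt (r ^ 2 + ε ^ 2) ^ k := pow_le_pow_left₀ h0.le hru k
    have : r ^ (a + 1) / Real.sqrt (r ^ 2 + ε ^ 2) ^ k ≤ r ^ (a + 1) / r ^ k :=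
      div_le_div_of_nonneg_left (Real.rpow_nonneg hr _) (by positivity) hpow
    refine this.trans (le_of_eq ?_)
    rw [show a + 1 - (k:ℝ) = (a + 1) - (k:ℝ) by ring, Real.rpow_sub h0, Real.rpow_natCast]

lemma rpow_le_self_of_le_one {r e : ℝ} (hr0 : 0 ≤ r) (hr1 : r ≤ 1) (he : 1 ≤ e) :
    r ^ e ≤ r := by
  rcases eq_or_lt_of_le hr0 with h0 | h0
  · rw [← h0, Real.zero_rpow (by linarith)]
  · calc r ^ e ≤ r ^ (1:ℝ) := Real.rpow_le_rpow_of_exponent_ge h0 hr1 he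
    _ = r := Real.rpow_one r

lemma window_small (k : ℕ) (hk : 1 ≤ k) (a : ℝ) (ha : (k:ℝ) ≤ a) (t : ℝ) (ht : 0 ≤ t)
    (ζ : ℝ → ℝ) (hcont : ContinuousOn ζ (Set.Ici 0)) {σ : ℝ} (hσ : 0 < σ) :
    ∃ δ > (0:ℝ), ∃ ε₁ > (0:ℝ), ∀ ε, 0 < ε → ε < ε₁ → ∀ r, 0 ≤ r → |r - t| < δ →
      |ζ r * r ^ (a + 1) / (2 * (k:ℝ) * Real.sqrt (r ^ 2 + ε ^ 2) ^ k)
        - ζ t * t ^ (a + 1 - (k:ℝ)) / (2 * (k:ℝ))| < σ := by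
  have hk0 : (0:ℝ) < (k:ℝ) := by exact_mod_cast hk
  have hak : (1:ℝ) ≤ a + 1 - k := by linarith
  rcases eq_or_lt_of_le ht with ht0 | ht0
  · -- t = 0
    obtain ⟨C, hC⟩ := isCompact_Icc.exists_bound_of_continuousOn
      (hcont.mono (Set.Icc_subset_Ici_self : Set.Icc (0:ℝ) 1 ⊆ _))
    have hC0 : 0 ≤ C := le_trans (norm_nonneg (ζ 0)) (hC 0 (by norm_num))
    have hc0 : ζ t * t ^ (a + 1 - (k:ℝ)) / (2 * (k:ℝ)) = 0 := by
      rw [← ht0, Real.zero_rpow (by linarith)]; ring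
    refine ⟨min 1 (σ * (2 * k) / (C + 1)), by positivity, 1, one_pos, fun ε hε hε1 r hr hrδ => ?_⟩
    rw [hc0, sub_zero]
    rw [← ht0, sub_zero] at hrδ
    have hr1 : r ≤ 1 := le_of_lt (lt_of_lt_of_le (lt_of_abs_lt hrδ) (min_le_left _ _))
    have hrσ : r < σ * (2 * k) / (C + 1) := lt_of_lt_of_le (lt_of_abs_lt hrδ) (min_le_right _ _)
    have hu : 0 < Real.sqrt (r ^ 2 + ε ^ 2) := Real.sqrt_pos.2 (by positivity)
    have habs : |ζ r * r ^ (a + 1) / (2 * (k:ℝ) * Real.sqrt (r ^ 2 + ε ^ 2) ^ k)|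
        = |ζ r| * (r ^ (a + 1) / Real.sqrt (r ^ 2 + ε ^ 2) ^ k) / (2 * (k:ℝ)) := by
      rw [abs_div, abs_mul, abs_of_nonneg (Real.rpow_nonneg hr _),
        abs_of_pos (by positivity : (0:ℝ) < 2 * (k:ℝ) * Real.sqrt (r ^ 2 + ε ^ 2) ^ k)]
      rw [div_mul_eq_div_div_swap, mul_div_assoc]
    rw [habs]
    have h1 : r ^ (a + 1) / Real.sqrt (r ^ 2 + ε ^ 2) ^ k ≤ r :=
      (g_pt_le hε hr (by linarith) (by linarith)).trans
        (rpow_le_self_of_le_one hr hr1 hak)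
    have h2 : |ζ r| ≤ C := by
      have := hC r (Set.mem_Icc.2 ⟨hr, hr1⟩); simpa using this
    have hd : (0:ℝ) < 2 * (k:ℝ) := by positivity
    calc |ζ r| * (r ^ (a + 1) / Real.sqrt (r ^ 2 + ε ^ 2) ^ k) / (2 * (k:ℝ))
        ≤ C * r / (2 * (k:ℝ)) := by
          gcongr
      _ ≤ C * (σ * (2 * k) / (C + 1)) / (2 * (k:ℝ)) := by gcongr
      _ = σ * (C / (C + 1)) := by field_simp
      _ < σ * 1 := by
          apply mul_lt_mul_of_pos_left _ hσ
          rw [div_lt_one (by positivity)]; linarith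
      _ = σ := mul_one σ
  · -- t > 0
    set Φ : ℝ × ℝ → ℝ := fun p =>
      ζ p.2 * p.2 ^ (a + 1) / (2 * (k:ℝ) * Real.sqrt (p.2 ^ 2 + p.1 ^ 2) ^ k) with hΦdef
    have h1 : ContinuousWithinAt (fun p : ℝ × ℝ => ζ p.2) (Set.univ ×ˢ Set.Ici 0) (0, t) :=
      ContinuousWithinAt.comp (hcont t ht) continuous_snd.continuousWithinAt
        (fun p hp => hp.2)
    have h2 : ContinuousAt (fun p : ℝ × ℝ => p.2 ^ (a + 1)) (0, t) :=
      (Real.continuousAt_rpow_const t (a + 1) (Or.inl (ne_of_gt ht0))).comp (x := ((0:ℝ), t)) (f := Prod.snd)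
        continuous_snd.continuousAt
    have h3 : Continuous (fun p : ℝ × ℝ => 2 * (k:ℝ) * Real.sqrt (p.2 ^ 2 + p.1 ^ 2) ^ k) :=
      continuous_const.mul ((Real.continuous_sqrt.comp (by continuity)).pow k)
    have hne : 2 * (k:ℝ) * Real.sqrt (t ^ 2 + 0 ^ 2) ^ k ≠ 0 := by
      have : Real.sqrt (t ^ 2 + 0 ^ 2) = t := by
        rw [show t ^ 2 + 0 ^ 2 = t ^ 2 by ring, Real.sqrt_sq ht]
      rw [this]; positivity
    have hΦ : ContinuousWithinAt Φ (Set.univ ×ˢ Set.Ici 0) (0, t) :=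
      (h1.mul h2.continuousWithinAt).div (h3.continuousAt).continuousWithinAt hne
    have hΦval : Φ (0, t) = ζ t * t ^ (a + 1 - (k:ℝ)) / (2 * (k:ℝ)) := by
      simp only [hΦdef]
      rw [show t ^ 2 + 0 ^ 2 = t ^ 2 by ring, Real.sqrt_sq ht,
        show a + 1 - (k:ℝ) = (a + 1) - (k:ℝ) by ring, Real.rpow_sub ht0, Real.rpow_natCast]
      field_simp
    rw [Metric.continuousWithinAt_iff] at hΦ
    obtain ⟨δ, hδ0, hδ⟩ := hΦ σ hσ
    refine ⟨δ, hδ0, δ, hδ0, fun ε hε hε1 r hr hrδ => ?_⟩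
    have hmem : ((ε, r) : ℝ × ℝ) ∈ Set.univ ×ˢ Set.Ici 0 := ⟨trivial, hr⟩
    have hdist : dist ((ε, r) : ℝ × ℝ) (0, t) < δ := by
      rw [Prod.dist_eq]
      apply max_lt
      · rw [Real.dist_eq, sub_zero, abs_of_pos hε]; exact hε1
      · rw [Real.dist_eq]; exact hrδ
    have := hδ hmem hdist
    rw [hΦval, Real.dist_eq] at this
    exact this

lemma D_integral_bound {k : ℕ} (hk : 1 ≤ k) {t ε : ℝ} (hε : 0 < ε) {g : ℝ → ℝ} {x y β : ℝ}
    (hx : 0 ≤ x) (hxy : x ≤ y) (hgc : ContinuousOn g (Set.Icc x y))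
    (hβ : ∀ r ∈ Set.Icc x y, |g r| ≤ β) :
    |∫ r in x..y, g r * Wdn k t ε r| ≤ β * (Wfn k t ε y - Wfn k t ε x) := by
  have hWc : Continuous (Wdn k t ε) := continuous_Wdn hε
  have hint1 : IntervalIntegrable (fun r => g r * Wdn k t ε r) MeasureTheory.volume x y := by
    apply ContinuousOn.intervalIntegrable
    rw [Set.uIcc_of_le hxy]
    exact hgc.mul hWc.continuousOn
  have hint2 : IntervalIntegrable (fun r => β * Wdn k t ε r) MeasureTheory.volume x y :=
    (continuous_const.mul hWc).intervalIntegrable x y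
  have hftc : ∫ r in x..y, Wdn k t ε r = Wfn k t ε y - Wfn k t ε x :=
    intervalIntegral.integral_eq_sub_of_hasDerivAt
      (fun u _ => hasDerivAt_Wfn hk hε u) (hWc.intervalIntegrable x y)
  calc |∫ r in x..y, g r * Wdn k t ε r| ≤ ∫ r in x..y, ‖g r * Wdn k t ε r‖ := by
        rw [← Real.norm_eq_abs]
        exact intervalIntegral.norm_integral_le_integral_norm hxy
    _ ≤ ∫ r in x..y, β * Wdn k t ε r := by
        apply intervalIntegral.integral_mono_on hxy hint1.norm hint2
        intro r hr
        rw [Real.norm_eq_abs, abs_mul, abs_of_nonneg (Wdn_nonneg hε (le_trans hx hr.1))]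
        exact mul_le_mul_of_nonneg_right (hβ r hr) (Wdn_nonneg hε (le_trans hx hr.1))
    _ = β * (Wfn k t ε y - Wfn k t ε x) := by
        rw [intervalIntegral.integral_const_mul, hftc]

lemma tendsto_Wfn_gt (k : ℕ) {t x : ℝ} (hx0 : 0 ≤ x) (hx : t < x) :
    Tendsto (fun ε : ℝ => Wfn k t ε x) (nhdsWithin 0 (Set.Ioi 0)) (𝓝 ((1/2 : ℝ) ^ k)) := by
  have h := tendsto_Wfn k hx0 (ne_of_gt hx)
  have : ((1 + (x - t) / |x - t|) / 4 : ℝ) ^ k = (1/2 : ℝ) ^ k := by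
    rw [abs_of_pos (by linarith : (0:ℝ) < x - t), div_self (by linarith : x - t ≠ 0)]
    norm_num
  rwa [this] at h

lemma tendsto_Wfn_lt (k : ℕ) (hk : 1 ≤ k) {t x : ℝ} (hx0 : 0 ≤ x) (hx : x < t) :
    Tendsto (fun ε : ℝ => Wfn k t ε x) (nhdsWithin 0 (Set.Ioi 0)) (𝓝 0) := by
  have h := tendsto_Wfn k hx0 (ne_of_lt hx)
  have : ((1 + (x - t) / |x - t|) / 4 : ℝ) ^ k = 0 := by
    rw [abs_of_neg (by linarith : x - t < 0), div_neg, div_self (by intro h'; linarith : x - t ≠ 0)]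
    rw [show (1 : ℝ) + -1 = 0 by ring, zero_div]
    exact zero_pow (by omega)
  rwa [this] at h

lemma T2_tendsto (k : ℕ) (hk : 1 ≤ k) (a : ℝ) (ha : (k : ℝ) ≤ a) (t : ℝ) (ht : 0 ≤ t)
    (ζ : ℝ → ℝ) (hcont : ContinuousOn ζ (Set.Ici 0)) (M : ℝ) (hM0 : 0 < M) (hMt : t < M)
    (hζ0 : ∀ r, M < r → ζ r = 0) :
    Tendsto (fun ε : ℝ => ∫ r in Set.Ioi (0:ℝ),
        ζ r * r ^ (a + 1) / (2 * (k:ℝ) * Real.sqrt (r ^ 2 + ε ^ 2) ^ k) * Wdn k t ε r)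
      (nhdsWithin 0 (Set.Ioi 0))
      (𝓝 (((2:ℝ) ^ (k + 1))⁻¹ / (k:ℝ) * ζ t * t ^ (a + 1 - (k:ℝ)))) := by
  have hk0 : (0:ℝ) < (k:ℝ) := by exact_mod_cast hk
  have hak : (1:ℝ) ≤ a + 1 - k := by linarith
  set c : ℝ := ζ t * t ^ (a + 1 - (k:ℝ)) / (2 * (k:ℝ)) with hc
  have hS : ((2:ℝ) ^ (k + 1))⁻¹ / (k:ℝ) * ζ t * t ^ (a + 1 - (k:ℝ)) = c * (1/2 : ℝ) ^ k := by
    rw [hc, one_div, inv_pow, pow_succ]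
    have h2k : ((2:ℝ) ^ k) ≠ 0 := by positivity
    field_simp
  -- continuity facts
  have hgcont : ∀ ε : ℝ, 0 < ε → ContinuousOn
      (fun r => ζ r * r ^ (a + 1) / (2 * (k:ℝ) * Real.sqrt (r ^ 2 + ε ^ 2) ^ k)) (Set.Ici 0) := by
    intro ε hε
    apply ContinuousOn.div (hcont.mul (contOn_rpow (by linarith)))
    · exact (continuous_const.mul ((continuous_sqrt_comp hε).pow k)).continuousOn
    · intro x _
      have := sqrt_inner_pos hε x
      positivity
  have hgWcont : ∀ ε : ℝ, 0 < ε → ContinuousOn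
      (fun r => ζ r * r ^ (a + 1) / (2 * (k:ℝ) * Real.sqrt (r ^ 2 + ε ^ 2) ^ k) * Wdn k t ε r)
      (Set.Ici 0) :=
    fun ε hε => (hgcont ε hε).mul (continuous_Wdn hε).continuousOn
  have hgW0 : ∀ ε : ℝ, ∀ r, M < r →
      ζ r * r ^ (a + 1) / (2 * (k:ℝ) * Real.sqrt (r ^ 2 + ε ^ 2) ^ k) * Wdn k t ε r = 0 := by
    intro ε r hr; rw [hζ0 r hr]; ring
  -- reduce to interval integral and split off the constant
  have hstep : ∀ ε : ℝ, 0 < ε →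
      (∫ r in Set.Ioi (0:ℝ),
        ζ r * r ^ (a + 1) / (2 * (k:ℝ) * Real.sqrt (r ^ 2 + ε ^ 2) ^ k) * Wdn k t ε r)
      = (∫ r in (0:ℝ)..M,
          (ζ r * r ^ (a + 1) / (2 * (k:ℝ) * Real.sqrt (r ^ 2 + ε ^ 2) ^ k) - c) * Wdn k t ε r)
        + c * (Wfn k t ε M - Wfn k t ε 0) := by
    intro ε hε
    have hWc : Continuous (Wdn k t ε) := continuous_Wdn hε
    have huIcc : Set.uIcc (0:ℝ) M = Set.Icc 0 M := Set.uIcc_of_le hM0.le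
    have hint1 : IntervalIntegrable
        (fun r => ζ r * r ^ (a + 1) / (2 * (k:ℝ) * Real.sqrt (r ^ 2 + ε ^ 2) ^ k) * Wdn k t ε r)
        MeasureTheory.volume 0 M := by
      apply ContinuousOn.intervalIntegrable
      rw [huIcc]
      exact (hgWcont ε hε).mono Set.Icc_subset_Ici_self
    have hftc : ∫ r in (0:ℝ)..M, Wdn k t ε r = Wfn k t ε M - Wfn k t ε 0 :=
      intervalIntegral.integral_eq_sub_of_hasDerivAt
        (fun u _ => hasDerivAt_Wfn hk hε u) (hWc.intervalIntegrable 0 M)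
    rw [setIntegral_Ioi_eq_intervalIntegral hM0 (hgW0 ε)
      (integrableOn_Ioi_of_support hM0 ((hgWcont ε hε).mono Set.Icc_subset_Ici_self) (hgW0 ε))]
    have : ∀ r : ℝ, (ζ r * r ^ (a + 1) / (2 * (k:ℝ) * Real.sqrt (r ^ 2 + ε ^ 2) ^ k) - c)
        * Wdn k t ε r
        = ζ r * r ^ (a + 1) / (2 * (k:ℝ) * Real.sqrt (r ^ 2 + ε ^ 2) ^ k) * Wdn k t ε r
          - c * Wdn k t ε r := fun r => by ring
    rw [intervalIntegral.integral_congr (fun r _ => this r),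
      intervalIntegral.integral_sub (g := fun r => c * Wdn k t ε r) hint1
        ((continuous_const.mul hWc).intervalIntegrable 0 M),
      intervalIntegral.integral_const_mul, hftc]
    ring
  -- second piece tends to c * (1/2)^k
  have hT2b : Tendsto (fun ε : ℝ => c * (Wfn k t ε M - Wfn k t ε 0))
      (nhdsWithin 0 (Set.Ioi 0)) (𝓝 (c * (1/2 : ℝ) ^ k)) := by
    rcases eq_or_lt_of_le ht with ht0 | ht0
    · have hc0 : c = 0 := by
        rw [hc, ← ht0, Real.zero_rpow (by linarith)]; ring
      simp only [hc0, zero_mul]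
      exact tendsto_const_nhds
    · have hWM := tendsto_Wfn_gt k (by linarith : (0:ℝ) ≤ M) hMt
      have hW0 := tendsto_Wfn_lt k hk (le_refl (0:ℝ)) ht0
      have := tendsto_const_nhds (x := c) (f := nhdsWithin (0:ℝ) (Set.Ioi 0)) |>.mul
        (hWM.sub hW0)
      simpa using this
  -- first piece tends to 0
  have hT2a : Tendsto (fun ε : ℝ => ∫ r in (0:ℝ)..M,
      (ζ r * r ^ (a + 1) / (2 * (k:ℝ) * Real.sqrt (r ^ 2 + ε ^ 2) ^ k) - c) * Wdn k t ε r)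
      (nhdsWithin 0 (Set.Ioi 0)) (𝓝 0) := by
    rw [Metric.tendsto_nhds]
    intro σ hσ
    obtain ⟨δ0, hδ00, ε₁, hε₁0, hwin⟩ := window_small k hk a ha t ht ζ hcont
      (show (0:ℝ) < σ/4 by linarith)
    set p : ℝ := max 0 (t - δ0/2) with hpdef
    set q : ℝ := min M (t + δ0/2) with hqdef
    have hp0 : 0 ≤ p := le_max_left _ _
    have hpt : p ≤ t := max_le ht (by linarith)
    have htq : t < q := lt_min hMt (by linarith)
    have hqM : q ≤ M := min_le_left _ _
    have hpq : p ≤ q := le_trans hpt htq.le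
    have hq0 : 0 ≤ q := le_trans hp0 hpq
    -- global bound
    obtain ⟨C, hC⟩ := isCompact_Icc.exists_bound_of_continuousOn
      (hcont.mono (Set.Icc_subset_Ici_self : Set.Icc (0:ℝ) M ⊆ _))
    have hC0 : 0 ≤ C := le_trans (norm_nonneg (ζ 0)) (hC 0 (by constructor <;> linarith))
    set B : ℝ := C * M ^ (a + 1 - (k:ℝ)) / (2 * (k:ℝ)) + |c| + 1 with hBdef
    have hB0 : 0 < B := by
      rw [hBdef]
      have h1 : 0 ≤ C * M ^ (a + 1 - (k:ℝ)) / (2 * (k:ℝ)) := by positivity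
      have h2 := abs_nonneg c
      linarith
    have hBbound : ∀ ε : ℝ, 0 < ε → ∀ r ∈ Set.Icc (0:ℝ) M,
        |ζ r * r ^ (a + 1) / (2 * (k:ℝ) * Real.sqrt (r ^ 2 + ε ^ 2) ^ k) - c| ≤ B := by
      intro ε hε r hr
      have hu : 0 < Real.sqrt (r ^ 2 + ε ^ 2) := Real.sqrt_pos.2 (by positivity)
      have habs : |ζ r * r ^ (a + 1) / (2 * (k:ℝ) * Real.sqrt (r ^ 2 + ε ^ 2) ^ k)|
          = |ζ r| * (r ^ (a + 1) / Real.sqrt (r ^ 2 + ε ^ 2) ^ k) / (2 * (k:ℝ)) := by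
        rw [abs_div, abs_mul, abs_of_nonneg (Real.rpow_nonneg hr.1 _),
          abs_of_pos (by positivity : (0:ℝ) < 2 * (k:ℝ) * Real.sqrt (r ^ 2 + ε ^ 2) ^ k)]
        rw [div_mul_eq_div_div_swap, mul_div_assoc]
      have h1 : r ^ (a + 1) / Real.sqrt (r ^ 2 + ε ^ 2) ^ k ≤ M ^ (a + 1 - (k:ℝ)) :=
        (g_pt_le hε hr.1 (by linarith) (by linarith)).trans
          (Real.rpow_le_rpow hr.1 hr.2 (by linarith))
      calc |ζ r * r ^ (a + 1) / (2 * (k:ℝ) * Real.sqrt (r ^ 2 + ε ^ 2) ^ k) - c|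
          ≤ |ζ r * r ^ (a + 1) / (2 * (k:ℝ) * Real.sqrt (r ^ 2 + ε ^ 2) ^ k)| + |c| :=
            abs_sub _ _
        _ ≤ C * M ^ (a + 1 - (k:ℝ)) / (2 * (k:ℝ)) + |c| := by
            rw [habs]
            have h2 : |ζ r| ≤ C := by simpa using hC r hr
            have hnn : 0 ≤ r ^ (a + 1) / Real.sqrt (r ^ 2 + ε ^ 2) ^ k :=
              div_nonneg (Real.rpow_nonneg hr.1 _) (by positivity)
            refine add_le_add ?_ le_rfl
            gcongr
        _ ≤ B := by rw [hBdef]; linarith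
    -- eventual facts
    have hE3 : Tendsto (fun ε : ℝ => Wfn k t ε M - Wfn k t ε q)
        (nhdsWithin 0 (Set.Ioi 0)) (𝓝 0) := by
      have := (tendsto_Wfn_gt k (by linarith : (0:ℝ) ≤ M) hMt).sub (tendsto_Wfn_gt k hq0 htq)
      simpa using this
    have hE4 : Tendsto (fun ε : ℝ => Wfn k t ε p - Wfn k t ε 0)
        (nhdsWithin 0 (Set.Ioi 0)) (𝓝 0) := by
      rcases le_or_gt (t - δ0/2) 0 with hple | hpgt
      · have hp : p = 0 := max_eq_left hple
        rw [hp]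
        simpa using tendsto_const_nhds (x := (0:ℝ)) (f := nhdsWithin (0:ℝ) (Set.Ioi 0))
      · have hp : p = t - δ0/2 := max_eq_right hpgt.le
        have hpt' : p < t := by rw [hp]; linarith
        have ht0' : (0:ℝ) < t := lt_of_le_of_lt hp0 hpt'
        have h1 := tendsto_Wfn_lt k hk hp0 hpt'
        have h2 := tendsto_Wfn_lt k hk (le_refl (0:ℝ)) ht0'
        simpa using h1.sub h2
    have hEa : ∀ᶠ ε : ℝ in nhdsWithin 0 (Set.Ioi 0),
        |Wfn k t ε M - Wfn k t ε q| < σ/(4*B) := by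
      rw [Metric.tendsto_nhds] at hE3
      filter_upwards [hE3 (σ/(4*B)) (by positivity)] with ε h
      rwa [Real.dist_0_eq_abs] at h
    have hEb : ∀ᶠ ε : ℝ in nhdsWithin 0 (Set.Ioi 0),
        |Wfn k t ε p - Wfn k t ε 0| < σ/(4*B) := by
      rw [Metric.tendsto_nhds] at hE4
      filter_upwards [hE4 (σ/(4*B)) (by positivity)] with ε h
      rwa [Real.dist_0_eq_abs] at h
    have hEc : ∀ᶠ ε : ℝ in nhdsWithin 0 (Set.Ioi 0), ε < ε₁ :=
      Filter.Eventually.filter_mono nhdsWithin_le_nhds (eventually_lt_nhds hε₁0)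
    filter_upwards [self_mem_nhdsWithin, hEc, hEa, hEb] with ε (hε : 0 < ε) hεε₁ h3 h4
    have hgcOn : ContinuousOn
        (fun r => ζ r * r ^ (a + 1) / (2 * (k:ℝ) * Real.sqrt (r ^ 2 + ε ^ 2) ^ k) - c)
        (Set.Icc 0 M) := ((hgcont ε hε).mono Set.Icc_subset_Ici_self).sub continuousOn_const
    have hintxy : ∀ x y : ℝ, 0 ≤ x → y ≤ M → x ≤ y → IntervalIntegrable
        (fun r => (ζ r * r ^ (a + 1) / (2 * (k:ℝ) * Real.sqrt (r ^ 2 + ε ^ 2) ^ k) - c)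
          * Wdn k t ε r) MeasureTheory.volume x y := by
      intro x y hx hy hxy
      apply ContinuousOn.intervalIntegrable
      rw [Set.uIcc_of_le hxy]
      exact (hgcOn.mono (Set.Icc_subset_Icc hx hy)).mul (continuous_Wdn hε).continuousOn
    have hpM : p ≤ M := hpq.trans hqM
    have hsplit3 : (∫ r in (0:ℝ)..M,
        (ζ r * r ^ (a + 1) / (2 * (k:ℝ) * Real.sqrt (r ^ 2 + ε ^ 2) ^ k) - c) * Wdn k t ε r)
        = (∫ r in (0:ℝ)..p,
            (ζ r * r ^ (a + 1) / (2 * (k:ℝ) * Real.sqrt (r ^ 2 + ε ^ 2) ^ k) - c) * Wdn k t ε r)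
          + (∫ r in p..q,
            (ζ r * r ^ (a + 1) / (2 * (k:ℝ) * Real.sqrt (r ^ 2 + ε ^ 2) ^ k) - c) * Wdn k t ε r)
          + (∫ r in q..M,
            (ζ r * r ^ (a + 1) / (2 * (k:ℝ) * Real.sqrt (r ^ 2 + ε ^ 2) ^ k) - c) * Wdn k t ε r) := by
      rw [intervalIntegral.integral_add_adjacent_intervals (hintxy 0 p le_rfl hpM hp0)
        (hintxy p q hp0 (hqM) hpq),
        intervalIntegral.integral_add_adjacent_intervals (hintxy 0 q le_rfl hqM hq0)
        (hintxy q M hq0 le_rfl (hqM.trans le_rfl))]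
    have b1 : |∫ r in (0:ℝ)..p,
        (ζ r * r ^ (a + 1) / (2 * (k:ℝ) * Real.sqrt (r ^ 2 + ε ^ 2) ^ k) - c) * Wdn k t ε r|
        ≤ B * (Wfn k t ε p - Wfn k t ε 0) :=
      D_integral_bound hk hε le_rfl hp0 (hgcOn.mono (Set.Icc_subset_Icc le_rfl hpM))
        (fun r hr => hBbound ε hε r ⟨hr.1, hr.2.trans hpM⟩)
    have b3 : |∫ r in q..M,
        (ζ r * r ^ (a + 1) / (2 * (k:ℝ) * Real.sqrt (r ^ 2 + ε ^ 2) ^ k) - c) * Wdn k t ε r|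
        ≤ B * (Wfn k t ε M - Wfn k t ε q) :=
      D_integral_bound hk hε hq0 hqM (hgcOn.mono (Set.Icc_subset_Icc hq0 le_rfl))
        (fun r hr => hBbound ε hε r ⟨hq0.trans hr.1, hr.2⟩)
    have b2 : |∫ r in p..q,
        (ζ r * r ^ (a + 1) / (2 * (k:ℝ) * Real.sqrt (r ^ 2 + ε ^ 2) ^ k) - c) * Wdn k t ε r|
        ≤ (σ/4) * (Wfn k t ε q - Wfn k t ε p) := by
      apply D_integral_bound hk hε hp0 hpq (hgcOn.mono (Set.Icc_subset_Icc hp0 (hqM)))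
      intro r hr
      have hr0 : 0 ≤ r := hp0.trans hr.1
      have hrabs : |r - t| < δ0 := by
        rw [abs_lt]
        constructor
        · have : t - δ0/2 ≤ p := le_max_right _ _
          have := hr.1
          linarith
        · have : q ≤ t + δ0/2 := min_le_right _ _
          have := hr.2
          linarith
      exact (hwin ε hε hεε₁ r hr0 hrabs).le
    rw [Real.dist_0_eq_abs, hsplit3]
    have hW1 : Wfn k t ε q - Wfn k t ε p ≤ 1 := by
      have h1 := Wfn_le (k := k) (t := t) hε q
      have h2 := Wfn_nonneg (k := k) (t := t) hε p
      have h3 : ((1:ℝ)/2) ^ k ≤ 1 := pow_le_one₀ (by norm_num) (by norm_num)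
      linarith
    have hB1 : B * (Wfn k t ε p - Wfn k t ε 0) < σ/4 := by
      calc B * (Wfn k t ε p - Wfn k t ε 0) ≤ B * |Wfn k t ε p - Wfn k t ε 0| :=
            mul_le_mul_of_nonneg_left (le_abs_self _) hB0.le
        _ < B * (σ/(4*B)) := mul_lt_mul_of_pos_left h4 hB0
        _ = σ/4 := by field_simp
    have hB3 : B * (Wfn k t ε M - Wfn k t ε q) < σ/4 := by
      calc B * (Wfn k t ε M - Wfn k t ε q) ≤ B * |Wfn k t ε M - Wfn k t ε q| :=
            mul_le_mul_of_nonneg_left (le_abs_self _) hB0.le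
        _ < B * (σ/(4*B)) := mul_lt_mul_of_pos_left h3 hB0
        _ = σ/4 := by field_simp
    have hB2 : (σ/4) * (Wfn k t ε q - Wfn k t ε p) ≤ σ/4 := by
      calc (σ/4) * (Wfn k t ε q - Wfn k t ε p) ≤ (σ/4) * 1 :=
            mul_le_mul_of_nonneg_left hW1 (by linarith)
        _ = σ/4 := mul_one _
    refine lt_of_le_of_lt (abs_add_three _ _ _) ?_
    linarith [b1, b2, b3]
  -- combine
  rw [hS]
  have hfin := hT2a.add hT2b
  rw [zero_add] at hfin
  apply Tendsto.congr' _ hfin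
  filter_upwards [self_mem_nhdsWithin] with ε (hε : 0 < ε)
  exact (hstep ε hε).symm

/-- For an integer `k ≥ 1`, a real `a ≥ k`, `t ≥ 0` and a
continuous compactly supported `ζ` on `[0,∞)`, as `ε → 0⁺`,
`∫_0^∞ ζ(r) r^{a+2} h_ε''(r²) (h_ε'(r²))^{k-1} dr` converges to
`−2^{−(k+1)} ∫_t^∞ ζ(r) r^{a−k} dr + (2^{−(k+1)}/k) ζ(t) t^{a+1−k}`
(with `t^{a+1−k} = 0` when `t = 0`, since `a+1−k ≥ 1`). -/
theorem stmt11 (k : ℕ) (hk : 1 ≤ k) (a : ℝ) (ha : (k : ℝ) ≤ a) (t : ℝ) (ht : 0 ≤ t)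
    (ζ : ℝ → ℝ) (hcont : ContinuousOn ζ (Set.Ici 0))
    (hsupp : ∃ M : ℝ, ∀ r : ℝ, M < r → ζ r = 0) :
    Tendsto
      (fun ε : ℝ => ∫ r in Set.Ioi (0 : ℝ),
        ζ r * r ^ (a + 2) * deriv (deriv (heps t ε)) (r ^ 2) * (deriv (heps t ε) (r ^ 2)) ^ (k - 1))
      (nhdsWithin 0 (Set.Ioi 0))
      (𝓝 (-((2 : ℝ) ^ (k + 1))⁻¹ * (∫ r in Set.Ioi t, ζ r * r ^ (a - (k : ℝ))) +
        ((2 : ℝ) ^ (k + 1))⁻¹ / (k : ℝ) * ζ t * t ^ (a + 1 - (k : ℝ)))) := by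
  obtain ⟨M0, hM0⟩ := hsupp
  set M : ℝ := max M0 t + 1 with hMdef
  have hMpos : 0 < M := by
    have : t ≤ max M0 t := le_max_right _ _
    rw [hMdef]; linarith
  have hMt : t < M := by
    have : t ≤ max M0 t := le_max_right _ _
    rw [hMdef]; linarith
  have hζ0 : ∀ r, M < r → ζ r = 0 := by
    intro r hr
    apply hM0
    have : M0 ≤ max M0 t := le_max_left _ _
    rw [hMdef] at hr; linarith
  have h1 := T1_tendsto k hk a ha t ht ζ hcont M hMpos hζ0
  have h2 := T2_tendsto k hk a ha t ht ζ hcont M hMpos hMt hζ0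
  have hsum := h1.add h2
  apply Tendsto.congr' _ hsum
  filter_upwards [self_mem_nhdsWithin] with ε (hε : 0 < ε)
  -- integrability of the two pieces
  have hAcont : ContinuousOn
      (fun r : ℝ => -(ζ r * r ^ (a + 2) / (2 * (r ^ 2 + ε ^ 2))) * (h1f t ε (r ^ 2)) ^ k)
      (Set.Ici 0) := by
    refine ContinuousOn.mul ?_ (((continuous_h1f_comp hε).pow k).continuousOn)
    refine ContinuousOn.neg (ContinuousOn.div (hcont.mul (contOn_rpow (by linarith))) ?_ ?_)
    · exact (continuous_const.mul ((continuous_pow 2).add continuous_const)).continuousOn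
    · intro x _; have : (0:ℝ) < x ^ 2 + ε ^ 2 := by positivity
      positivity
  have hA0 : ∀ r, M < r →
      -(ζ r * r ^ (a + 2) / (2 * (r ^ 2 + ε ^ 2))) * (h1f t ε (r ^ 2)) ^ k = 0 := by
    intro r hr; rw [hζ0 r hr]; ring
  have hAint : IntegrableOn
      (fun r : ℝ => -(ζ r * r ^ (a + 2) / (2 * (r ^ 2 + ε ^ 2))) * (h1f t ε (r ^ 2)) ^ k)
      (Set.Ioi 0) :=
    integrableOn_Ioi_of_support hMpos (hAcont.mono Set.Icc_subset_Ici_self) hA0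
  have hGcont : ContinuousOn
      (fun r : ℝ => ζ r * r ^ (a + 1) / (2 * (k:ℝ) * Real.sqrt (r ^ 2 + ε ^ 2) ^ k)
        * Wdn k t ε r) (Set.Ici 0) := by
    refine ContinuousOn.mul ?_ (continuous_Wdn hε).continuousOn
    apply ContinuousOn.div (hcont.mul (contOn_rpow (by linarith)))
    · exact (continuous_const.mul ((continuous_sqrt_comp hε).pow k)).continuousOn
    · intro x _
      have := sqrt_inner_pos hε x
      positivity
  have hG0 : ∀ r, M < r →
      ζ r * r ^ (a + 1) / (2 * (k:ℝ) * Real.sqrt (r ^ 2 + ε ^ 2) ^ k) * Wdn k t ε r = 0 := by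
    intro r hr; rw [hζ0 r hr]; ring
  have hGint : IntegrableOn
      (fun r : ℝ => ζ r * r ^ (a + 1) / (2 * (k:ℝ) * Real.sqrt (r ^ 2 + ε ^ 2) ^ k)
        * Wdn k t ε r) (Set.Ioi 0) :=
    integrableOn_Ioi_of_support hMpos (hGcont.mono Set.Icc_subset_Ici_self) hG0
  -- pointwise identity
  have hpt : ∀ r ∈ Set.Ioi (0:ℝ),
      ζ r * r ^ (a + 2) * deriv (deriv (heps t ε)) (r ^ 2) * (deriv (heps t ε) (r ^ 2)) ^ (k - 1)
      = -(ζ r * r ^ (a + 2) / (2 * (r ^ 2 + ε ^ 2))) * (h1f t ε (r ^ 2)) ^ k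
        + ζ r * r ^ (a + 1) / (2 * (k:ℝ) * Real.sqrt (r ^ 2 + ε ^ 2) ^ k) * Wdn k t ε r := by
    intro r hr
    have hr0 : (0:ℝ) < r := hr
    have hs : -ε ^ 2 < r ^ 2 := by nlinarith
    have hd1 : deriv (heps t ε) (r ^ 2) = h1f t ε (r ^ 2) := (hasDerivAt_heps hε _ hs).deriv
    have hd2 : deriv (deriv (heps t ε)) (r ^ 2) = h2f t ε (r ^ 2) := by
      have hev : deriv (heps t ε) =ᶠ[𝓝 (r ^ 2)] h1f t ε := by
        filter_upwards [isOpen_Ioi.mem_nhds (show r ^ 2 ∈ Set.Ioi (-ε ^ 2) from hs)]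
          with x (hx : -ε ^ 2 < x)
        exact (hasDerivAt_heps hε x hx).deriv
      rw [hev.deriv_eq]
      exact (hasDerivAt_h1f hε _ hs).deriv
    rw [hd1, hd2]
    exact integrand_split hk a hε hr0 (ζ r)
  rw [MeasureTheory.setIntegral_congr_fun measurableSet_Ioi hpt,
    MeasureTheory.integral_add hAint hGint]
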